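/- arXiv:2209.00499 — 13 statements merged into one kernel-verified Lean document; each statement's English description precedes it below -/
import Mathlib

section
/- Let U = {c^1,…,c^N} ⊆ ℝ^n be a finite set of nonnegative scenario vectors, let t ≥ 0, and let ĉ ∈ conv(U) satisfy c^i ≤ t·ĉ componentwise for all i ∈ [N]. If x̂ ∈ X minimizes ĉᵀx over X, then for every x ∈ X it holds that max_{c ∈ U} cᵀx̂ ≤ t · max_{c ∈ U} cᵀx; that is, any optimizer with respect to the single scenario ĉ is a t-approximation for the one-stage robust optimization problem with respect to U. -/
/-- Single representative scenario from the convex hull dominating all scenarios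
after scaling by `t` gives a `t`-approximation for one-stage robust optimization. -/
theorem stmt_0 {n N : ℕ} [NeZero N]
    (c : Fin N → Fin n → ℝ) (hc : ∀ i j, 0 ≤ c i j)
    (X : Set (Fin n → ℝ)) (hXnonneg : ∀ x ∈ X, ∀ j, 0 ≤ x j) (hXne : X.Nonempty)
    (t : ℝ) (ht : 0 ≤ t)
    (chat : Fin n → ℝ) (hhull : chat ∈ convexHull ℝ (Set.range c))
    (hdom : ∀ i, ∀ j, c i j ≤ t * chat j)
    (xhat : Fin n → ℝ) (hxhat : xhat ∈ X)
    (hopt : ∀ x ∈ X, ∑ j, chat j * xhat j ≤ ∑ j, chat j * x j) :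
    ∀ x ∈ X,
      (Finset.univ.sup' Finset.univ_nonempty fun i => ∑ j, c i j * xhat j) ≤
        t * (Finset.univ.sup' Finset.univ_nonempty fun i => ∑ j, c i j * x j) := by
  intro x hx
  set M : ℝ := Finset.univ.sup' Finset.univ_nonempty fun i => ∑ j, c i j * x j with hM
  -- chat · x ≤ M since the halfspace {v | ∑ v j * x j ≤ M} is convex and contains range c
  have hlin : IsLinearMap ℝ (fun v : Fin n → ℝ => ∑ j, v j * x j) := by
    constructor
    · intro u v; simp [add_mul, Finset.sum_add_distrib]
    · intro a v; simp [Finset.mul_sum, mul_assoc]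
  have hsub : Set.range c ⊆ {v : Fin n → ℝ | ∑ j, v j * x j ≤ M} := by
    rintro _ ⟨i, rfl⟩
    exact Finset.le_sup' (fun i => ∑ j, c i j * x j) (Finset.mem_univ i)
  have hchatx : ∑ j, chat j * x j ≤ M :=
    convexHull_min hsub (convex_halfSpace_le hlin M) hhull
  refine (Finset.sup'_le _ _ fun i _ => ?_)
  have h1 : ∑ j, c i j * xhat j ≤ t * ∑ j, chat j * xhat j := by
    rw [Finset.mul_sum]
    exact Finset.sum_le_sum fun j _ => by
      have := mul_le_mul_of_nonneg_right (hdom i j) (hXnonneg xhat hxhat j)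
      linarith [this]
  calc ∑ j, c i j * xhat j ≤ t * ∑ j, chat j * xhat j := h1
    _ ≤ t * ∑ j, chat j * x j := mul_le_mul_of_nonneg_left (hopt x hx) ht
    _ ≤ t * M := mul_le_mul_of_nonneg_left hchatx ht
end

section
/- (Theorem 1) Let U = {c^1,…,c^N} ⊆ ℝ^n be a finite set of nonnegative scenario vectors and let ĉ ∈ ℝ^n be nonnegative. Suppose α, β ≥ 0 satisfy: (i) c^i ≤ α·ĉ componentwise for all i ∈ [N], and (ii) there exists c' ∈ conv(U) with ĉ ≤ β·c' componentwise. If x̂ ∈ X minimizes ĉᵀx over X, then for every x ∈ X it holds that max_{c ∈ U} cᵀx̂ ≤ αβ · max_{c ∈ U} cᵀx; that is, any optimizer with respect to ĉ gives an αβ-approximation to the one-stage robust optimization problem with respect to U. -/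
/-- Theorem 1: a single scenario `chat` with `c^i ≤ α chat` for all `i` and
`chat ≤ β c'` for some `c'` in the convex hull of `U` gives an `αβ`-approximation
for the one-stage robust problem. -/
theorem stmt_1 {n N : ℕ} [NeZero N]
    (c : Fin N → Fin n → ℝ) (hc : ∀ i j, 0 ≤ c i j)
    (X : Set (Fin n → ℝ)) (hXnonneg : ∀ x ∈ X, ∀ j, 0 ≤ x j) (hXne : X.Nonempty)
    (chat : Fin n → ℝ) (hchat : ∀ j, 0 ≤ chat j)
    (α β : ℝ) (hα : 0 ≤ α) (hβ : 0 ≤ β)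
    (hdom : ∀ i, ∀ j, c i j ≤ α * chat j)
    (hcov : ∃ c' ∈ convexHull ℝ (Set.range c), ∀ j, chat j ≤ β * c' j)
    (xhat : Fin n → ℝ) (hxhat : xhat ∈ X)
    (hopt : ∀ x ∈ X, ∑ j, chat j * xhat j ≤ ∑ j, chat j * x j) :
    ∀ x ∈ X,
      (Finset.univ.sup' Finset.univ_nonempty fun i => ∑ j, c i j * xhat j) ≤
        α * β * (Finset.univ.sup' Finset.univ_nonempty fun i => ∑ j, c i j * x j) := by
  obtain ⟨c', hc'mem, hc'⟩ := hcov
  intro x hx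
  have hx0 := hXnonneg x hx
  have hxhat0 := hXnonneg xhat hxhat
  set M := Finset.univ.sup' Finset.univ_nonempty fun i => ∑ j, c i j * x j with hM
  have hlin : ∑ j, c' j * x j ≤ M := by
    have hconv : Convex ℝ {v : Fin n → ℝ | ∑ j, v j * x j ≤ M} := by
      intro u hu v hv a b ha hb hab
      simp only [Set.mem_setOf_eq] at hu hv ⊢
      have heq : ∑ j, (a • u + b • v) j * x j
          = a * ∑ j, u j * x j + b * ∑ j, v j * x j := by
        simp [Finset.mul_sum, ← Finset.sum_add_distrib, add_mul, mul_assoc]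
      rw [heq]
      calc a * ∑ j, u j * x j + b * ∑ j, v j * x j
          ≤ a * M + b * M := add_le_add
            (mul_le_mul_of_nonneg_left hu ha) (mul_le_mul_of_nonneg_left hv hb)
        _ = M := by rw [← add_mul, hab, one_mul]
    have hsub : Set.range c ⊆ {v : Fin n → ℝ | ∑ j, v j * x j ≤ M} := by
      rintro _ ⟨i, rfl⟩
      exact Finset.le_sup' (fun i => ∑ j, c i j * x j) (Finset.mem_univ i)
    exact convexHull_min hsub hconv hc'mem
  apply Finset.sup'_le
  intro i _
  calc ∑ j, c i j * xhat j
      ≤ ∑ j, α * chat j * xhat j :=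
        Finset.sum_le_sum fun j _ => mul_le_mul_of_nonneg_right (hdom i j) (hxhat0 j)
    _ = α * ∑ j, chat j * xhat j := by rw [Finset.mul_sum]; simp [mul_assoc]
    _ ≤ α * ∑ j, chat j * x j := mul_le_mul_of_nonneg_left (hopt x hx) hα
    _ ≤ α * ∑ j, β * c' j * x j := by
        refine mul_le_mul_of_nonneg_left (Finset.sum_le_sum fun j _ => ?_) hα
        exact mul_le_mul_of_nonneg_right (hc' j) (hx0 j)
    _ = α * (β * ∑ j, c' j * x j) := by simp [Finset.mul_sum, mul_assoc]
    _ ≤ α * (β * M) := by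
        exact mul_le_mul_of_nonneg_left (mul_le_mul_of_nonneg_left hlin hβ) hα
    _ = α * β * M := by ring
end

section
/- (Theorem 2) Let U = {c^1,…,c^N} ⊆ ℝ^n and C = {ĉ^1,…,ĉ^K} ⊆ ℝ^n be finite sets of nonnegative vectors, and let α, β ≥ 0 satisfy: (i) for every i ∈ [N] there exists ĉ ∈ conv(C) with c^i ≤ α·ĉ componentwise, and (ii) for every k ∈ [K] there exists c ∈ conv(U) with ĉ^k ≤ β·c componentwise. If x̂ ∈ X minimizes max_{c ∈ C} cᵀx over X, then for every x ∈ X it holds that max_{c ∈ U} cᵀx̂ ≤ αβ · max_{c ∈ U} cᵀx; that is, an optimal solution to the robust problem with respect to C gives an αβ-approximation to the robust problem with respect to U. -/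
lemma hull_dot_le {n m : ℕ} (f : Fin m → Fin n → ℝ) (x : Fin n → ℝ) (M : ℝ)
    (h : ∀ k, ∑ j, f k j * x j ≤ M) :
    ∀ d ∈ convexHull ℝ (Set.range f), ∑ j, d j * x j ≤ M := by
  have hlin : IsLinearMap ℝ (fun d : Fin n → ℝ => ∑ j, d j * x j) := by
    constructor
    · intro a b; simp [add_mul, Finset.sum_add_distrib]
    · intro r a; simp [Finset.mul_sum, mul_assoc]
  have hconv : Convex ℝ {d : Fin n → ℝ | ∑ j, d j * x j ≤ M} :=
    convex_halfSpace_le hlin M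
  intro d hd
  have := convexHull_min (fun y hy => ?_) hconv hd
  · exact this
  · obtain ⟨k, rfl⟩ := hy
    exact h k

/-- Theorem 2: if every scenario of `U` is dominated by `α` times a point in
`conv(C)` and every scenario of `C` is dominated by `β` times a point in `conv(U)`,
then a robust optimizer with respect to `C` is an `αβ`-approximation with respect to `U`. -/
theorem stmt_2 {n N K : ℕ} [NeZero N] [NeZero K]
    (c : Fin N → Fin n → ℝ) (hc : ∀ i j, 0 ≤ c i j)
    (chat : Fin K → Fin n → ℝ) (hchat : ∀ k j, 0 ≤ chat k j)
    (X : Set (Fin n → ℝ)) (hXnonneg : ∀ x ∈ X, ∀ j, 0 ≤ x j) (hXne : X.Nonempty)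
    (α β : ℝ) (hα : 0 ≤ α) (hβ : 0 ≤ β)
    (hdom : ∀ i, ∃ d ∈ convexHull ℝ (Set.range chat), ∀ j, c i j ≤ α * d j)
    (hcov : ∀ k, ∃ c' ∈ convexHull ℝ (Set.range c), ∀ j, chat k j ≤ β * c' j)
    (xhat : Fin n → ℝ) (hxhat : xhat ∈ X)
    (hopt : ∀ x ∈ X,
      (Finset.univ.sup' Finset.univ_nonempty fun k => ∑ j, chat k j * xhat j) ≤
        Finset.univ.sup' Finset.univ_nonempty fun k => ∑ j, chat k j * x j) :
    ∀ x ∈ X,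
      (Finset.univ.sup' Finset.univ_nonempty fun i => ∑ j, c i j * xhat j) ≤
        α * β * (Finset.univ.sup' Finset.univ_nonempty fun i => ∑ j, c i j * x j) := by
  intro x hxX
  apply Finset.sup'_le
  intro i _
  obtain ⟨d, hdmem, hdle⟩ := hdom i
  -- step 1: c i ⬝ xhat ≤ α * (d ⬝ xhat)
  have step1 : ∑ j, c i j * xhat j ≤ α * ∑ j, d j * xhat j := by
    rw [Finset.mul_sum]
    apply Finset.sum_le_sum
    intro j _
    rw [← mul_assoc]
    exact mul_le_mul_of_nonneg_right (hdle j) (hXnonneg xhat hxhat j)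
  -- step 2: d ⬝ xhat ≤ sup' chat ⬝ xhat
  have step2 : ∑ j, d j * xhat j ≤
      Finset.univ.sup' Finset.univ_nonempty fun k => ∑ j, chat k j * xhat j := by
    apply hull_dot_le chat xhat _ (fun k => Finset.le_sup' (fun k => ∑ j, chat k j * xhat j) (Finset.mem_univ k)) d hdmem
  -- step 3: sup' chat ⬝ x ≤ β * sup' c ⬝ x
  have step3 : (Finset.univ.sup' Finset.univ_nonempty fun k => ∑ j, chat k j * x j) ≤
      β * Finset.univ.sup' Finset.univ_nonempty fun i => ∑ j, c i j * x j := by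
    apply Finset.sup'_le
    intro k _
    obtain ⟨c', hc'mem, hc'le⟩ := hcov k
    have h1 : ∑ j, chat k j * x j ≤ β * ∑ j, c' j * x j := by
      rw [Finset.mul_sum]
      apply Finset.sum_le_sum
      intro j _
      rw [← mul_assoc]
      exact mul_le_mul_of_nonneg_right (hc'le j) (hXnonneg x hxX j)
    have h2 : ∑ j, c' j * x j ≤
        Finset.univ.sup' Finset.univ_nonempty fun i => ∑ j, c i j * x j :=
      hull_dot_le c x _ (fun i => Finset.le_sup' (fun i => ∑ j, c i j * x j) (Finset.mem_univ i)) c' hc'mem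
    exact h1.trans (mul_le_mul_of_nonneg_left h2 hβ)
  calc ∑ j, c i j * xhat j
      ≤ α * ∑ j, d j * xhat j := step1
    _ ≤ α * Finset.univ.sup' Finset.univ_nonempty (fun k => ∑ j, chat k j * xhat j) :=
        mul_le_mul_of_nonneg_left step2 hα
    _ ≤ α * Finset.univ.sup' Finset.univ_nonempty (fun k => ∑ j, chat k j * x j) :=
        mul_le_mul_of_nonneg_left (hopt x hxX) hα
    _ ≤ α * (β * Finset.univ.sup' Finset.univ_nonempty fun i => ∑ j, c i j * x j) :=
        mul_le_mul_of_nonneg_left step3 hα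
    _ = α * β * Finset.univ.sup' Finset.univ_nonempty fun i => ∑ j, c i j * x j := by ring
end

section
/- Let U = {c^1,…,c^N} ⊆ ℝ^n and C = {ĉ^1,…,ĉ^K} ⊆ ℝ^n be finite sets of nonnegative vectors, and let α, β ≥ 0 satisfy: (i) for every i ∈ [N] there exists ĉ ∈ conv(C) with c^i ≤ α·ĉ componentwise, and (ii) for every k ∈ [K] there exists c ∈ conv(U) with ĉ^k ≤ β·c componentwise. Then there exists a set C' ⊆ conv(U) with |C'| ≤ K such that for every i ∈ [N] there exists c̃ ∈ conv(C') with c^i ≤ αβ·c̃ componentwise. In other words, the conditions of the multi-scenario one-stage approximation theorem can always be met with β = 1 and cluster scenarios lying in conv(U), without impairing the guarantee αβ. -/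
/-- The conditions of the multi-scenario one-stage approximation theorem can always be
met with `β = 1` and cluster scenarios lying in `conv(U)`, without impairing the
guarantee `αβ`. -/
theorem stmt_3 {n N K : ℕ} [NeZero N] [NeZero K]
    (c : Fin N → Fin n → ℝ) (hc : ∀ i j, 0 ≤ c i j)
    (chat : Fin K → Fin n → ℝ) (hchat : ∀ k j, 0 ≤ chat k j)
    (α β : ℝ) (hα : 0 ≤ α) (hβ : 0 ≤ β)
    (hdom : ∀ i, ∃ d ∈ convexHull ℝ (Set.range chat), ∀ j, c i j ≤ α * d j)
    (hcov : ∀ k, ∃ c' ∈ convexHull ℝ (Set.range c), ∀ j, chat k j ≤ β * c' j) :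
    ∃ C' : Finset (Fin n → ℝ),
      (C' : Set (Fin n → ℝ)) ⊆ convexHull ℝ (Set.range c) ∧
      C'.card ≤ K ∧
      ∀ i, ∃ ctil ∈ convexHull ℝ (C' : Set (Fin n → ℝ)),
        ∀ j, c i j ≤ α * β * ctil j := by
  choose c' hc'mem hc'le using hcov
  refine ⟨Finset.image c' Finset.univ, ?_, ?_, ?_⟩
  · intro x hx
    simp only [Finset.coe_image, Finset.coe_univ, Set.image_univ] at hx
    obtain ⟨k, rfl⟩ := hx
    exact hc'mem k
  · simpa using (Finset.card_image_le (f := c') (s := Finset.univ))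
  · intro i
    obtain ⟨d, hd, hdle⟩ := hdom i
    rw [convexHull_eq] at hd
    obtain ⟨ι, t, w, z, hw0, hw1, hz, hcm⟩ := hd
    have hzk : ∀ m, ∃ k, m ∈ t → chat k = z m := by
      intro m
      by_cases hm : m ∈ t
      · obtain ⟨k, hk⟩ := hz m hm
        exact ⟨k, fun _ => hk⟩
      · exact ⟨Classical.arbitrary (Fin K), fun h => absurd h hm⟩
    choose f hf using hzk
    refine ⟨∑ m ∈ t, w m • c' (f m), ?_, ?_⟩
    · have := Finset.centerMass_mem_convexHull (s := ((Finset.image c' Finset.univ : Finset (Fin n → ℝ)) : Set (Fin n → ℝ)))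
        t (w := w) (z := fun m => c' (f m))
        hw0 (by rw [hw1]; norm_num)
        (fun m hm => by simp)
      rwa [Finset.centerMass_eq_of_sum_1 _ _ hw1] at this
    · intro j
      have hdj : c i j ≤ α * d j := hdle j
      have hdval : d j = ∑ m ∈ t, w m * z m j := by
        rw [← hcm, Finset.centerMass_eq_of_sum_1 _ _ hw1]
        simp [Finset.sum_apply]
      have hsum : (∑ m ∈ t, w m • c' (f m)) j = ∑ m ∈ t, w m * c' (f m) j := by
        simp [Finset.sum_apply]
      rw [hsum]
      calc c i j ≤ α * d j := hdj
        _ = α * ∑ m ∈ t, w m * z m j := by rw [hdval]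
        _ ≤ α * ∑ m ∈ t, w m * (β * c' (f m) j) := by
            apply mul_le_mul_of_nonneg_left _ hα
            apply Finset.sum_le_sum
            intro m hm
            apply mul_le_mul_of_nonneg_left _ (hw0 m hm)
            rw [← hf m hm]
            exact hc'le (f m) j
        _ = α * β * ∑ m ∈ t, w m * c' (f m) j := by
            rw [Finset.mul_sum, Finset.mul_sum]
            apply Finset.sum_congr rfl
            intro m _; ring
end

section
/- (Corollary 3) Let U = {c^1,…,c^N} ⊆ ℝ^n be a finite set of nonnegative scenario vectors and let C = {ĉ^1,…,ĉ^K} ⊆ conv(U). Let α ≥ 0 be such that for each i ∈ [N] there exists ĉ ∈ conv(C) with c^i ≤ α·ĉ componentwise. If x̂ ∈ X minimizes max_{c ∈ C} cᵀx over X, then for every x ∈ X it holds that max_{c ∈ U} cᵀx̂ ≤ α · max_{c ∈ U} cᵀx; that is, an optimal solution to the robust problem with respect to C gives an α-approximation to the robust problem with respect to U. -/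
/-- If every point of `s` has objective value at most `M`, so does every point of
its convex hull. -/
lemma hull_obj_le {n : ℕ} (x : Fin n → ℝ) (M : ℝ) (s : Set (Fin n → ℝ))
    (h : ∀ y ∈ s, ∑ j, y j * x j ≤ M) :
    ∀ d ∈ convexHull ℝ s, ∑ j, d j * x j ≤ M := by
  have hlin : IsLinearMap ℝ (fun y : Fin n → ℝ => ∑ j, y j * x j) := by
    constructor
    · intro a b
      simp [add_mul, Finset.sum_add_distrib]
    · intro r a
      simp [Finset.mul_sum, mul_assoc]
  have := convexHull_min (s := s)
    (t := {y : Fin n → ℝ | (fun y => ∑ j, y j * x j) y ≤ M}) h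
    (convex_halfSpace_le hlin M)
  exact fun d hd => this hd

/-- Corollary 3: if `C ⊆ conv(U)` and every scenario of `U` is dominated by `α` times a
point of `conv(C)`, then a robust optimizer with respect to `C` is an `α`-approximation
with respect to `U`. -/
theorem stmt_4 {n N K : ℕ} [NeZero N] [NeZero K]
    (c : Fin N → Fin n → ℝ) (hc : ∀ i j, 0 ≤ c i j)
    (chat : Fin K → Fin n → ℝ)
    (hsub : ∀ k, chat k ∈ convexHull ℝ (Set.range c))
    (X : Set (Fin n → ℝ)) (hXnonneg : ∀ x ∈ X, ∀ j, 0 ≤ x j) (hXne : X.Nonempty)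
    (α : ℝ) (hα : 0 ≤ α)
    (hdom : ∀ i, ∃ d ∈ convexHull ℝ (Set.range chat), ∀ j, c i j ≤ α * d j)
    (xhat : Fin n → ℝ) (hxhat : xhat ∈ X)
    (hopt : ∀ x ∈ X,
      (Finset.univ.sup' Finset.univ_nonempty fun k => ∑ j, chat k j * xhat j) ≤
        Finset.univ.sup' Finset.univ_nonempty fun k => ∑ j, chat k j * x j) :
    ∀ x ∈ X,
      (Finset.univ.sup' Finset.univ_nonempty fun i => ∑ j, c i j * xhat j) ≤
        α * (Finset.univ.sup' Finset.univ_nonempty fun i => ∑ j, c i j * x j) := by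
  intro x hx
  set MU := (Finset.univ.sup' Finset.univ_nonempty fun i => ∑ j, c i j * x j) with hMU
  set MChat := (Finset.univ.sup' Finset.univ_nonempty fun k => ∑ j, chat k j * xhat j)
  -- Step 1: max over C at x is ≤ MU, since each chat k ∈ conv(range c)
  have hCx : (Finset.univ.sup' Finset.univ_nonempty fun k => ∑ j, chat k j * x j) ≤ MU := by
    apply Finset.sup'_le
    intro k _
    apply hull_obj_le x MU (Set.range c) _ (chat k) (hsub k)
    rintro y ⟨i, rfl⟩
    exact Finset.le_sup' (fun i => ∑ j, c i j * x j) (Finset.mem_univ i)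
  -- Step 2: max over U at xhat ≤ α * MChat
  have hUxhat : (Finset.univ.sup' Finset.univ_nonempty fun i => ∑ j, c i j * xhat j)
      ≤ α * MChat := by
    apply Finset.sup'_le
    intro i _
    obtain ⟨d, hd, hdle⟩ := hdom i
    have h1 : ∑ j, c i j * xhat j ≤ α * ∑ j, d j * xhat j := by
      rw [Finset.mul_sum]
      apply Finset.sum_le_sum
      intro j _
      have := mul_le_mul_of_nonneg_right (hdle j) (hXnonneg xhat hxhat j)
      linarith [this]
    have h2 : ∑ j, d j * xhat j ≤ MChat := by
      apply hull_obj_le xhat MChat (Set.range chat) _ d hd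
      rintro y ⟨k, rfl⟩
      exact Finset.le_sup' (fun k => ∑ j, chat k j * xhat j) (Finset.mem_univ k)
    calc ∑ j, c i j * xhat j ≤ α * ∑ j, d j * xhat j := h1
      _ ≤ α * MChat := mul_le_mul_of_nonneg_left h2 hα
  calc (Finset.univ.sup' Finset.univ_nonempty fun i => ∑ j, c i j * xhat j)
      ≤ α * MChat := hUxhat
    _ ≤ α * (Finset.univ.sup' Finset.univ_nonempty fun k => ∑ j, chat k j * x j) :=
        mul_le_mul_of_nonneg_left (hopt x hx) hα
    _ ≤ α * MU := mul_le_mul_of_nonneg_left hCx hα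
end

section
/- (Corollary: feasible clusterings give 1/t-approximations) Let U = {c^1,…,c^N} ⊆ ℝ^n be a finite set of nonnegative scenario vectors. Suppose t > 0, λ ∈ ℝ^{K×N} and μ ∈ ℝ^{N×K} satisfy: λ_{ki} ≥ 0 with Σ_{i∈[N]} λ_{ki} = 1 for all k ∈ [K]; μ_{ik} ≥ 0 with Σ_{k∈[K]} μ_{ik} = 1 for all i ∈ [N]; and t·c^i_j ≤ Σ_{k∈[K]} Σ_{ℓ∈[N]} μ_{ik} λ_{kℓ} c^ℓ_j for all i ∈ [N] and j ∈ [n]. Define ĉ^k = Σ_{i∈[N]} λ_{ki} c^i and C = {ĉ^1,…,ĉ^K}. If x̂ ∈ X minimizes max_{c ∈ C} cᵀx over X, then for every x ∈ X it holds that max_{c ∈ U} cᵀx̂ ≤ (1/t) · max_{c ∈ U} cᵀx. -/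
/-- Any feasible solution `(t, λ, μ)` of the continuous clustering problem yields a
reduced scenario set whose robust optimizer is a `1/t`-approximation. -/
theorem stmt_5 {n N K : ℕ} [NeZero N] [NeZero K]
    (c : Fin N → Fin n → ℝ) (hc : ∀ i j, 0 ≤ c i j)
    (X : Set (Fin n → ℝ)) (hXnonneg : ∀ x ∈ X, ∀ j, 0 ≤ x j) (hXne : X.Nonempty)
    (t : ℝ) (ht : 0 < t)
    (lam : Fin K → Fin N → ℝ) (mu : Fin N → Fin K → ℝ)
    (hlam_nonneg : ∀ k i, 0 ≤ lam k i) (hlam_sum : ∀ k, ∑ i, lam k i = 1)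
    (hmu_nonneg : ∀ i k, 0 ≤ mu i k) (hmu_sum : ∀ i, ∑ k, mu i k = 1)
    (hfeas : ∀ i j, t * c i j ≤ ∑ k, ∑ l, mu i k * lam k l * c l j)
    (chat : Fin K → Fin n → ℝ) (hchat : ∀ k j, chat k j = ∑ i, lam k i * c i j)
    (xhat : Fin n → ℝ) (hxhat : xhat ∈ X)
    (hopt : ∀ x ∈ X,
      (Finset.univ.sup' Finset.univ_nonempty fun k => ∑ j, chat k j * xhat j) ≤
        Finset.univ.sup' Finset.univ_nonempty fun k => ∑ j, chat k j * x j) :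
    ∀ x ∈ X,
      (Finset.univ.sup' Finset.univ_nonempty fun i => ∑ j, c i j * xhat j) ≤
        (1 / t) * (Finset.univ.sup' Finset.univ_nonempty fun i => ∑ j, c i j * x j) := by
  intro x hx
  -- Step A: for any y ∈ X, sup'_k chat·y ≤ sup'_i c·y
  have stepA : ∀ y ∈ X, (Finset.univ.sup' Finset.univ_nonempty fun k => ∑ j, chat k j * y j) ≤
      Finset.univ.sup' Finset.univ_nonempty fun i => ∑ j, c i j * y j := by
    intro y hy
    apply Finset.sup'_le
    intro k _
    have hrw : (∑ j, chat k j * y j) = ∑ i, lam k i * ∑ j, c i j * y j := by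
      simp only [hchat, Finset.sum_mul, Finset.mul_sum, mul_assoc]
      exact Finset.sum_comm
    rw [hrw]
    calc ∑ i, lam k i * ∑ j, c i j * y j
        ≤ ∑ i, lam k i * (Finset.univ.sup' Finset.univ_nonempty fun i => ∑ j, c i j * y j) := by
          apply Finset.sum_le_sum
          intro i _
          exact mul_le_mul_of_nonneg_left
            (Finset.le_sup' (fun i => ∑ j, c i j * y j) (Finset.mem_univ i))
            (hlam_nonneg k i)
      _ = _ := by rw [← Finset.sum_mul, hlam_sum, one_mul]
  -- Step B: for each i, t * (c i · xhat) ≤ sup'_k chat·xhat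
  have stepB : ∀ i, t * (∑ j, c i j * xhat j) ≤
      Finset.univ.sup' Finset.univ_nonempty fun k => ∑ j, chat k j * xhat j := by
    intro i
    have h1 : t * (∑ j, c i j * xhat j) ≤ ∑ k, mu i k * ∑ j, chat k j * xhat j := by
      have hrw : (∑ k, mu i k * ∑ j, chat k j * xhat j)
          = ∑ j, (∑ k, ∑ l, mu i k * lam k l * c l j) * xhat j := by
        simp only [hchat, Finset.sum_mul, Finset.mul_sum, mul_assoc]
        rw [Finset.sum_comm]
      rw [hrw, Finset.mul_sum]
      apply Finset.sum_le_sum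
      intro j _
      rw [← mul_assoc]
      exact mul_le_mul_of_nonneg_right (hfeas i j) (hXnonneg xhat hxhat j)
    calc t * (∑ j, c i j * xhat j) ≤ ∑ k, mu i k * ∑ j, chat k j * xhat j := h1
      _ ≤ ∑ k, mu i k * (Finset.univ.sup' Finset.univ_nonempty fun k => ∑ j, chat k j * xhat j) := by
          apply Finset.sum_le_sum
          intro k _
          exact mul_le_mul_of_nonneg_left
            (Finset.le_sup' (fun k => ∑ j, chat k j * xhat j) (Finset.mem_univ k))
            (hmu_nonneg i k)
      _ = _ := by rw [← Finset.sum_mul, hmu_sum, one_mul]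
  have key : t * (Finset.univ.sup' Finset.univ_nonempty fun i => ∑ j, c i j * xhat j) ≤
      Finset.univ.sup' Finset.univ_nonempty fun i => ∑ j, c i j * x j := by
    obtain ⟨i0, _, hi0⟩ := Finset.exists_mem_eq_sup' Finset.univ_nonempty
      (fun i => ∑ j, c i j * xhat j)
    rw [hi0]
    exact le_trans (stepB i0) (le_trans (hopt x hx) (stepA x hx))
  rw [one_div, ← div_eq_inv_mul, le_div_iff₀ ht]
  linarith [key]
end

section
/- (Theorem 6, two-stage, single scenario) Let U = {c^1,…,c^N} ⊆ ℝ^n be a finite set of nonnegative scenario vectors and let ĉ ∈ ℝ^n be nonnegative. Suppose α, β ≥ 1 satisfy: (i) c^i ≤ α·ĉ componentwise for all i ∈ [N], and (ii) there exists c' ∈ U with ĉ ≤ β·c' componentwise. If x̂ ∈ X' minimizes Cᵀx + inf_{y ∈ X(x)} ĉᵀy over X', then for every x ∈ X' it holds that g_U(x̂) ≤ αβ · g_U(x); that is, any optimizer with respect to ĉ gives an αβ-approximation to the two-stage robust optimization problem with respect to U. -/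
lemma aux_cmp {n : ℕ} (a b : Fin n → ℝ) (γ : ℝ) (hγ : 0 < γ)
    (ha : ∀ j, 0 ≤ a j) (hab : ∀ j, a j ≤ γ * b j) (S : Set (Fin n → ℝ)) (hS : S.Nonempty)
    (hpos : ∀ y ∈ S, ∀ j, 0 ≤ y j) :
    sInf ((fun y => ∑ j, a j * y j) '' S) ≤ γ * sInf ((fun y => ∑ j, b j * y j) '' S) := by
  have hbdd : BddBelow ((fun y => ∑ j, a j * y j) '' S) := by
    refine ⟨0, ?_⟩
    rintro t ⟨z, hz, rfl⟩
    exact Finset.sum_nonneg fun j _ => mul_nonneg (ha j) (hpos z hz j)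
  rw [← div_le_iff₀' hγ]
  apply le_csInf (hS.image _)
  rintro t ⟨y, hy, rfl⟩
  rw [div_le_iff₀' hγ]
  have h1 : sInf ((fun y => ∑ j, a j * y j) '' S) ≤ ∑ j, a j * y j :=
    csInf_le hbdd ⟨y, hy, rfl⟩
  refine h1.trans ?_
  simp only []
  rw [Finset.mul_sum]
  exact Finset.sum_le_sum fun j _ => by
    rw [← mul_assoc]; exact mul_le_mul_of_nonneg_right (hab j) (hpos y hy j)

lemma aux_inf_nonneg {n : ℕ} (a : Fin n → ℝ) (ha : ∀ j, 0 ≤ a j)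
    (S : Set (Fin n → ℝ)) (hpos : ∀ y ∈ S, ∀ j, 0 ≤ y j) :
    0 ≤ sInf ((fun y => ∑ j, a j * y j) '' S) := by
  apply Real.sInf_nonneg
  rintro t ⟨z, hz, rfl⟩
  exact Finset.sum_nonneg fun j _ => mul_nonneg (ha j) (hpos z hz j)

lemma aux_final (A D S1 S2 B E α β : ℝ) (hα : 1 ≤ α) (hβ : 1 ≤ β)
    (hA : 0 ≤ A) (hD : 0 ≤ D) (hB : 0 ≤ B) (hS2 : 0 ≤ S2)
    (h1 : S1 ≤ α * B) (h3 : A + B ≤ D + E) (h2 : E ≤ β * S2) :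
    A + S1 ≤ α * β * (D + S2) := by
  nlinarith [mul_le_mul_of_nonneg_left h3 (le_trans zero_le_one hα),
    mul_le_mul_of_nonneg_left h2 (le_trans zero_le_one hα),
    mul_nonneg (sub_nonneg.2 hα) hA, mul_nonneg (sub_nonneg.2 hβ) hD,
    mul_nonneg (mul_nonneg (le_trans zero_le_one hα) (sub_nonneg.2 hβ)) hD,
    mul_nonneg (sub_nonneg.2 hα) hB]

set_option maxHeartbeats 1000000 in
/-- Theorem 6 (two-stage, single scenario): if `α, β ≥ 1`, `c^i ≤ α chat` for all `i`,
and `chat ≤ β c'` for some `c' ∈ U`, then any optimizer of the two-stage problem with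
respect to `chat` is an `αβ`-approximation for the two-stage robust problem
with respect to `U`. -/
theorem stmt_6 {nx n N : ℕ} [NeZero N]
    (X : Set ((Fin nx → ℝ) × (Fin n → ℝ)))
    (hXnonneg : ∀ p ∈ X, (∀ j, 0 ≤ p.1 j) ∧ (∀ j, 0 ≤ p.2 j))
    (Cst : Fin nx → ℝ) (hCst : ∀ j, 0 ≤ Cst j)
    (c : Fin N → Fin n → ℝ) (hc : ∀ i j, 0 ≤ c i j)
    (chat : Fin n → ℝ) (hchat : ∀ j, 0 ≤ chat j)
    (α β : ℝ) (hα : 1 ≤ α) (hβ : 1 ≤ β)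
    (hdom : ∀ i, ∀ j, c i j ≤ α * chat j)
    (hcov : ∃ i, ∀ j, chat j ≤ β * c i j)
    (xhat : Fin nx → ℝ) (hxhat : ∃ y, (xhat, y) ∈ X)
    (hopt : ∀ x : Fin nx → ℝ, (∃ y, (x, y) ∈ X) →
      (∑ j, Cst j * xhat j) +
          sInf ((fun y => ∑ j, chat j * y j) '' {y | (xhat, y) ∈ X}) ≤
        (∑ j, Cst j * x j) +
          sInf ((fun y => ∑ j, chat j * y j) '' {y | (x, y) ∈ X})) :
    ∀ x : Fin nx → ℝ, (∃ y, (x, y) ∈ X) →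
      (∑ j, Cst j * xhat j) +
          (Finset.univ.sup' Finset.univ_nonempty fun i =>
            sInf ((fun y => ∑ j, c i j * y j) '' {y | (xhat, y) ∈ X})) ≤
        α * β * ((∑ j, Cst j * x j) +
          (Finset.univ.sup' Finset.univ_nonempty fun i =>
            sInf ((fun y => ∑ j, c i j * y j) '' {y | (x, y) ∈ X}))) := by
  intro x hx
  have hα0 : (0:ℝ) < α := lt_of_lt_of_le one_pos hα
  have hβ0 : (0:ℝ) < β := lt_of_lt_of_le one_pos hβ
  have hShne : ({y | (xhat, y) ∈ X} : Set (Fin n → ℝ)).Nonempty := hxhat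
  have hSxne : ({y | (x, y) ∈ X} : Set (Fin n → ℝ)).Nonempty := hx
  have hShpos : ∀ y ∈ ({y | (xhat, y) ∈ X} : Set (Fin n → ℝ)), ∀ j, 0 ≤ y j :=
    fun y hy => (hXnonneg _ hy).2
  have hSxpos : ∀ y ∈ ({y | (x, y) ∈ X} : Set (Fin n → ℝ)), ∀ j, 0 ≤ y j :=
    fun y hy => (hXnonneg _ hy).2
  have hAx : 0 ≤ ∑ j, Cst j * x j := by
    obtain ⟨y, hy⟩ := hx
    exact Finset.sum_nonneg fun j _ => mul_nonneg (hCst j) ((hXnonneg _ hy).1 j)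
  have hAxh : 0 ≤ ∑ j, Cst j * xhat j := by
    obtain ⟨y, hy⟩ := hxhat
    exact Finset.sum_nonneg fun j _ => mul_nonneg (hCst j) ((hXnonneg _ hy).1 j)
  have h1 : (Finset.univ.sup' Finset.univ_nonempty fun i =>
      sInf ((fun y => ∑ j, c i j * y j) '' {y | (xhat, y) ∈ X})) ≤
      α * sInf ((fun y => ∑ j, chat j * y j) '' {y | (xhat, y) ∈ X}) := by
    apply Finset.sup'_le
    intro i _
    exact aux_cmp (c i) chat α hα0 (hc i) (hdom i) _ hShne hShpos
  obtain ⟨i0, hi0⟩ := hcov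
  have hle : sInf ((fun y => ∑ j, c i0 j * y j) '' {y | (x, y) ∈ X}) ≤
      (Finset.univ.sup' Finset.univ_nonempty fun i =>
        sInf ((fun y => ∑ j, c i j * y j) '' {y | (x, y) ∈ X})) :=
    Finset.le_sup' (fun i => sInf ((fun y => ∑ j, c i j * y j) '' {y | (x, y) ∈ X}))
      (Finset.mem_univ i0)
  have h2 : sInf ((fun y => ∑ j, chat j * y j) '' {y | (x, y) ∈ X}) ≤
      β * (Finset.univ.sup' Finset.univ_nonempty fun i =>
        sInf ((fun y => ∑ j, c i j * y j) '' {y | (x, y) ∈ X})) :=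
    (aux_cmp chat (c i0) β hβ0 hchat hi0 _ hSxne hSxpos).trans
      (mul_le_mul_of_nonneg_left hle (le_of_lt hβ0))
  have h3 := hopt x hx
  have h4 : 0 ≤ (Finset.univ.sup' Finset.univ_nonempty fun i =>
      sInf ((fun y => ∑ j, c i j * y j) '' {y | (x, y) ∈ X})) :=
    le_trans (aux_inf_nonneg (c i0) (hc i0) _ hSxpos) hle
  have h5 : 0 ≤ sInf ((fun y => ∑ j, chat j * y j) '' {y | (xhat, y) ∈ X}) :=
    aux_inf_nonneg chat hchat _ hShpos
  exact aux_final _ _ _ _ _ _ α β hα hβ hAxh hAx h5 h4 h1 h3 h2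
end

section
/- (Theorem 7, two-stage, multiple scenarios) Let U = {c^1,…,c^N} ⊆ ℝ^n and C = {ĉ^1,…,ĉ^K} ⊆ ℝ^n be finite sets of nonnegative vectors, and let α, β ≥ 1 satisfy: (i) for every i ∈ [N] there exists k ∈ [K] with c^i ≤ α·ĉ^k componentwise, and (ii) for every k ∈ [K] there exists i ∈ [N] with ĉ^k ≤ β·c^i componentwise. If x̂ ∈ X' minimizes Cᵀx + max_{ĉ ∈ C} inf_{y ∈ X(x)} ĉᵀy over X', then for every x ∈ X' it holds that g_U(x̂) ≤ αβ · g_U(x); that is, an optimal solution to the two-stage robust problem with respect to C gives an αβ-approximation to the two-stage robust problem with respect to U. -/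
set_option maxHeartbeats 800000

private lemma inf_nonneg' {n : ℕ} (T : Set (Fin n → ℝ)) (hT : T.Nonempty)
    (f : (Fin n → ℝ) → ℝ) (hf : ∀ y ∈ T, 0 ≤ f y) : 0 ≤ sInf (f '' T) := by
  apply le_csInf (hT.image f)
  rintro _ ⟨y, hy, rfl⟩; exact hf y hy

private lemma inf_le_scaled {n : ℕ} (T : Set (Fin n → ℝ)) (hT : T.Nonempty)
    (f g : (Fin n → ℝ) → ℝ) (hf : ∀ y ∈ T, 0 ≤ f y)
    (α : ℝ) (hα : 0 < α) (h : ∀ y ∈ T, f y ≤ α * g y) :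
    sInf (f '' T) ≤ α * sInf (g '' T) := by
  have hbdd : BddBelow (f '' T) := ⟨0, by rintro _ ⟨y, hy, rfl⟩; exact hf y hy⟩
  have hlb : sInf (f '' T) / α ≤ sInf (g '' T) := by
    apply le_csInf (hT.image g)
    rintro _ ⟨y, hy, rfl⟩
    rw [div_le_iff₀ hα, mul_comm]
    exact le_trans (csInf_le hbdd ⟨y, hy, rfl⟩) (h y hy)
  calc sInf (f '' T) = α * (sInf (f '' T) / α) := by field_simp
    _ ≤ α * sInf (g '' T) := by nlinarith

/-- Theorem 7 (two-stage, multiple scenarios): if `α, β ≥ 1`, every `c^i` is dominated by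
`α` times some `chat^k`, and every `chat^k` is dominated by `β` times some `c^i`, then an
optimizer of the two-stage robust problem with respect to `C` is an `αβ`-approximation
for the two-stage robust problem with respect to `U`. -/
theorem stmt_7 {nx n N K : ℕ} [NeZero N] [NeZero K]
    (X : Set ((Fin nx → ℝ) × (Fin n → ℝ)))
    (hXnonneg : ∀ p ∈ X, (∀ j, 0 ≤ p.1 j) ∧ (∀ j, 0 ≤ p.2 j))
    (Cst : Fin nx → ℝ) (hCst : ∀ j, 0 ≤ Cst j)
    (c : Fin N → Fin n → ℝ) (hc : ∀ i j, 0 ≤ c i j)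
    (chat : Fin K → Fin n → ℝ) (hchat : ∀ k j, 0 ≤ chat k j)
    (α β : ℝ) (hα : 1 ≤ α) (hβ : 1 ≤ β)
    (hdom : ∀ i, ∃ k, ∀ j, c i j ≤ α * chat k j)
    (hcov : ∀ k, ∃ i, ∀ j, chat k j ≤ β * c i j)
    (xhat : Fin nx → ℝ) (hxhat : ∃ y, (xhat, y) ∈ X)
    (hopt : ∀ x : Fin nx → ℝ, (∃ y, (x, y) ∈ X) →
      (∑ j, Cst j * xhat j) +
          (Finset.univ.sup' Finset.univ_nonempty fun k =>
            sInf ((fun y => ∑ j, chat k j * y j) '' {y | (xhat, y) ∈ X})) ≤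
        (∑ j, Cst j * x j) +
          (Finset.univ.sup' Finset.univ_nonempty fun k =>
            sInf ((fun y => ∑ j, chat k j * y j) '' {y | (x, y) ∈ X}))) :
    ∀ x : Fin nx → ℝ, (∃ y, (x, y) ∈ X) →
      (∑ j, Cst j * xhat j) +
          (Finset.univ.sup' Finset.univ_nonempty fun i =>
            sInf ((fun y => ∑ j, c i j * y j) '' {y | (xhat, y) ∈ X})) ≤
        α * β * ((∑ j, Cst j * x j) +
          (Finset.univ.sup' Finset.univ_nonempty fun i =>
            sInf ((fun y => ∑ j, c i j * y j) '' {y | (x, y) ∈ X}))) := by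
  intro x hx
  have hα0 : (0:ℝ) < α := lt_of_lt_of_le one_pos hα
  have hβ0 : (0:ℝ) < β := lt_of_lt_of_le one_pos hβ
  set T0 : Set (Fin n → ℝ) := {y | (xhat, y) ∈ X} with hT0def
  set T1 : Set (Fin n → ℝ) := {y | (x, y) ∈ X} with hT1def
  have hT0 : T0.Nonempty := hxhat
  have hT1 : T1.Nonempty := hx
  set GU0 : Fin N → ℝ := fun i => sInf ((fun y => ∑ j, c i j * y j) '' T0) with hGU0
  set GC0 : Fin K → ℝ := fun k => sInf ((fun y => ∑ j, chat k j * y j) '' T0) with hGC0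
  set GU1 : Fin N → ℝ := fun i => sInf ((fun y => ∑ j, c i j * y j) '' T1) with hGU1
  set GC1 : Fin K → ℝ := fun k => sInf ((fun y => ∑ j, chat k j * y j) '' T1) with hGC1
  have hy0 : ∀ y ∈ T0, ∀ j, 0 ≤ y j := fun y hy => (hXnonneg _ hy).2
  have hy1 : ∀ y ∈ T1, ∀ j, 0 ≤ y j := fun y hy => (hXnonneg _ hy).2
  have hfc0 : ∀ i, ∀ y ∈ T0, 0 ≤ ∑ j, c i j * y j := fun i y hy =>
    Finset.sum_nonneg fun j _ => mul_nonneg (hc i j) (hy0 y hy j)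
  have hfc1 : ∀ i, ∀ y ∈ T1, 0 ≤ ∑ j, c i j * y j := fun i y hy =>
    Finset.sum_nonneg fun j _ => mul_nonneg (hc i j) (hy1 y hy j)
  have hfch1 : ∀ k, ∀ y ∈ T1, 0 ≤ ∑ j, chat k j * y j := fun k y hy =>
    Finset.sum_nonneg fun j _ => mul_nonneg (hchat k j) (hy1 y hy j)
  have hfch0 : ∀ k, ∀ y ∈ T0, 0 ≤ ∑ j, chat k j * y j := fun k y hy =>
    Finset.sum_nonneg fun j _ => mul_nonneg (hchat k j) (hy0 y hy j)
  -- cost nonnegativity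
  obtain ⟨y1, hy1X⟩ := hx
  have hCx : 0 ≤ ∑ j, Cst j * x j :=
    Finset.sum_nonneg fun j _ => mul_nonneg (hCst j) ((hXnonneg _ hy1X).1 j)
  obtain ⟨y0, hy0X⟩ := hxhat
  have hCxhat : 0 ≤ ∑ j, Cst j * xhat j :=
    Finset.sum_nonneg fun j _ => mul_nonneg (hCst j) ((hXnonneg _ hy0X).1 j)
  -- pointwise comparisons
  have hAi : ∀ i, ∃ k, GU0 i ≤ α * GC0 k := by
    intro i
    obtain ⟨k, hk⟩ := hdom i
    refine ⟨k, ?_⟩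
    rw [hGU0, hGC0]
    refine inf_le_scaled T0 hT0 _ _ (hfc0 i) α hα0 fun y hy => ?_
    rw [Finset.mul_sum]
    exact Finset.sum_le_sum fun j _ => by
      rw [← mul_assoc]
      exact mul_le_mul_of_nonneg_right (hk j) (hy0 y hy j)
  have hCk : ∀ k, ∃ i, GC1 k ≤ β * GU1 i := by
    intro k
    obtain ⟨i, hi⟩ := hcov k
    refine ⟨i, ?_⟩
    rw [hGC1, hGU1]
    refine inf_le_scaled T1 hT1 _ _ (hfch1 k) β hβ0 fun y hy => ?_
    rw [Finset.mul_sum]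
    exact Finset.sum_le_sum fun j _ => by
      rw [← mul_assoc]
      exact mul_le_mul_of_nonneg_right (hi j) (hy1 y hy j)
  -- step A : sup GU0 ≤ α * sup GC0
  have stepA : Finset.univ.sup' Finset.univ_nonempty GU0 ≤
      α * Finset.univ.sup' Finset.univ_nonempty GC0 := by
    apply Finset.sup'_le
    intro i _
    obtain ⟨k, hk⟩ := hAi i
    exact hk.trans (mul_le_mul_of_nonneg_left
      (Finset.le_sup' GC0 (Finset.mem_univ k)) hα0.le)
  -- step C : sup GC1 ≤ β * sup GU1
  have stepC : Finset.univ.sup' Finset.univ_nonempty GC1 ≤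
      β * Finset.univ.sup' Finset.univ_nonempty GU1 := by
    apply Finset.sup'_le
    intro k _
    obtain ⟨i, hi⟩ := hCk k
    exact hi.trans (mul_le_mul_of_nonneg_left
      (Finset.le_sup' GU1 (Finset.mem_univ i)) hβ0.le)
  -- nonnegativity of sups
  have hGC0nn : 0 ≤ GC0 (Classical.arbitrary (Fin K)) := by
    rw [hGC0]; exact inf_nonneg' T0 hT0 _ (hfch0 _)
  have hGU1nn : 0 ≤ GU1 (Classical.arbitrary (Fin N)) := by
    rw [hGU1]; exact inf_nonneg' T1 hT1 _ (hfc1 _)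
  have hS0 : 0 ≤ Finset.univ.sup' Finset.univ_nonempty GC0 :=
    hGC0nn.trans (Finset.le_sup' GC0 (Finset.mem_univ _))
  have hS1 : 0 ≤ Finset.univ.sup' Finset.univ_nonempty GU1 :=
    hGU1nn.trans (Finset.le_sup' GU1 (Finset.mem_univ _))
  have hBopt := hopt x ⟨y1, hy1X⟩
  rw [← hT1def, ← hGC1] at hBopt
  have h1 : 0 ≤ (α - 1) * (∑ j, Cst j * xhat j) :=
    mul_nonneg (by linarith) hCxhat
  have h2 : 0 ≤ α * ((β - 1) * (∑ j, Cst j * x j)) :=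
    mul_nonneg hα0.le (mul_nonneg (by linarith) hCx)
  have h3 := mul_le_mul_of_nonneg_left hBopt hα0.le
  have h4 := mul_le_mul_of_nonneg_left stepC hα0.le
  nlinarith [stepA, hS0, hS1, hCx, hCxhat, h1, h2, h3, h4]
end

section
/- (Optimal two-stage cluster scenarios can be chosen from U) Let U = {c^1,…,c^N} ⊆ ℝ^n and C = {ĉ^1,…,ĉ^K} ⊆ ℝ^n be finite sets of nonnegative vectors, and let α, β ≥ 1 satisfy: (i) for every i ∈ [N] there exists k ∈ [K] with c^i ≤ α·ĉ^k componentwise, and (ii) for every k ∈ [K] there exists i ∈ [N] with ĉ^k ≤ β·c^i componentwise. Then there exists a subset C' ⊆ U with |C'| ≤ K such that for every i ∈ [N] there exists c ∈ C' with c^i ≤ αβ·c componentwise; in particular, C' satisfies conditions (i) and (ii) with parameters α' = αβ and β' = 1 and yields the same approximation guarantee αβ. -/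
/-- Optimal two-stage cluster scenarios can be chosen from `U`: under the two-stage
domination conditions with parameters `α, β ≥ 1`, there is a subset `C' ⊆ U` of at most
`K` scenarios such that every `c^i` is dominated by `αβ` times some member of `C'`
(i.e. conditions (i) and (ii) hold with `α' = αβ`, `β' = 1`). -/
theorem stmt_8 {n N K : ℕ} [NeZero N] [NeZero K]
    (c : Fin N → Fin n → ℝ) (hc : ∀ i j, 0 ≤ c i j)
    (chat : Fin K → Fin n → ℝ) (hchat : ∀ k j, 0 ≤ chat k j)
    (α β : ℝ) (hα : 1 ≤ α) (hβ : 1 ≤ β)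
    (hdom : ∀ i, ∃ k, ∀ j, c i j ≤ α * chat k j)
    (hcov : ∀ k, ∃ i, ∀ j, chat k j ≤ β * c i j) :
    ∃ S : Finset (Fin N), S.card ≤ K ∧
      ∀ i, ∃ l ∈ S, ∀ j, c i j ≤ α * β * c l j := by
  choose f hf using hcov
  refine ⟨Finset.image f Finset.univ, ?_, ?_⟩
  · calc (Finset.image f Finset.univ).card ≤ Finset.univ.card :=
        Finset.card_image_le
      _ = K := Finset.card_univ.trans (Fintype.card_fin K)
  · intro i
    obtain ⟨k, hk⟩ := hdom i
    refine ⟨f k, Finset.mem_image_of_mem f (Finset.mem_univ k), fun j => ?_⟩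
    calc c i j ≤ α * chat k j := hk j
      _ ≤ α * (β * c (f k) j) := by
          have := hf k j
          nlinarith [hchat k j]
      _ = α * β * c (f k) j := by ring
end

section
/- (Corollary 8) Let U = {c^1,…,c^N} ⊆ ℝ^n be a finite set of nonnegative scenario vectors and let C_1 ∪ C_2 ∪ … ∪ C_K be a partition of U into nonempty parts. For each k ∈ [K] let ĉ^k = (1/|C_k|) Σ_{c ∈ C_k} c be the average scenario of part C_k, and set U' = {ĉ^1,…,ĉ^K}. If x̂ ∈ X minimizes max_{c ∈ U'} cᵀx over X, then for every x ∈ X it holds that max_{c ∈ U} cᵀx̂ ≤ (max_{k ∈ [K]} |C_k|) · max_{c ∈ U} cᵀx; that is, an optimizer of the robust problem with respect to U' is a max_{k∈[K]} |C_k|-approximation for the robust problem with respect to U. -/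
/-- Corollary 8: partition the scenarios of `U` into `K` nonempty parts (given by the
assignment map `P`) and replace each part by its average scenario. A robust optimizer
with respect to the averaged set is a `max_k |C_k|`-approximation for the robust
problem with respect to `U`. -/
theorem stmt_9 {n N K : ℕ} [NeZero N] [NeZero K]
    (c : Fin N → Fin n → ℝ) (hc : ∀ i j, 0 ≤ c i j)
    (X : Set (Fin n → ℝ)) (hXnonneg : ∀ x ∈ X, ∀ j, 0 ≤ x j) (hXne : X.Nonempty)
    (P : Fin N → Fin K) (hP : ∀ k, ∃ i, P i = k)
    (chat : Fin K → Fin n → ℝ)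
    (hchat : ∀ k j, chat k j =
      (((Finset.univ.filter fun i => P i = k).card : ℝ))⁻¹ *
        ∑ i ∈ Finset.univ.filter fun i => P i = k, c i j)
    (xhat : Fin n → ℝ) (hxhat : xhat ∈ X)
    (hopt : ∀ x ∈ X,
      (Finset.univ.sup' Finset.univ_nonempty fun k => ∑ j, chat k j * xhat j) ≤
        Finset.univ.sup' Finset.univ_nonempty fun k => ∑ j, chat k j * x j) :
    ∀ x ∈ X,
      (Finset.univ.sup' Finset.univ_nonempty fun i => ∑ j, c i j * xhat j) ≤
        (Finset.univ.sup' Finset.univ_nonempty fun k =>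
            (((Finset.univ.filter fun i => P i = k).card : ℝ))) *
          (Finset.univ.sup' Finset.univ_nonempty fun i => ∑ j, c i j * x j) := by
  intro x hx
  classical
  set S : Fin K → Finset (Fin N) := fun k => Finset.univ.filter fun i => P i = k with hS
  have hSne : ∀ k, (S k).Nonempty := by
    intro k
    obtain ⟨i, hi⟩ := hP k
    exact ⟨i, by simp [hS, hi]⟩
  have hcard : ∀ k, (0:ℝ) < ((S k).card : ℝ) := by
    intro k
    exact_mod_cast Finset.card_pos.mpr (hSne k)
  have hdot : ∀ k (y : Fin n → ℝ), (∑ j, chat k j * y j)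
      = ((S k).card : ℝ)⁻¹ * ∑ i ∈ S k, ∑ j, c i j * y j := by
    intro k y
    simp only [hchat, Finset.sum_mul, Finset.mul_sum]
    rw [Finset.sum_comm]
    simp [hS, mul_assoc]
  have hynn : ∀ y ∈ X, ∀ i, (0:ℝ) ≤ ∑ j, c i j * y j := fun y hy i =>
    Finset.sum_nonneg fun j _ => mul_nonneg (hc i j) (hXnonneg y hy j)
  set A := Finset.univ.sup' Finset.univ_nonempty fun k => ∑ j, chat k j * xhat j with hA
  set M := Finset.univ.sup' Finset.univ_nonempty fun k => ((S k).card : ℝ) with hM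
  set B := Finset.univ.sup' Finset.univ_nonempty fun i => ∑ j, c i j * x j with hB
  have hAnn : (0:ℝ) ≤ A := by
    refine le_trans ?_ (Finset.le_sup' _ (Finset.mem_univ (Classical.arbitrary (Fin K))))
    rw [hdot]
    exact mul_nonneg (inv_nonneg.mpr (le_of_lt (hcard _)))
      (Finset.sum_nonneg fun i _ => hynn xhat hxhat i)
  have hMnn : (0:ℝ) ≤ M :=
    le_trans (le_of_lt (hcard (Classical.arbitrary (Fin K))))
      (Finset.le_sup' (fun k => ((S k).card : ℝ)) (Finset.mem_univ _))
  have h3 : (Finset.univ.sup' Finset.univ_nonempty fun k => ∑ j, chat k j * x j) ≤ B := by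
    apply Finset.sup'_le
    intro k _
    rw [hdot, inv_mul_le_iff₀ (hcard k)]
    calc ∑ i ∈ S k, ∑ j, c i j * x j
        ≤ ∑ _i ∈ S k, B := Finset.sum_le_sum fun i _ =>
          Finset.le_sup' (fun i => ∑ j, c i j * x j) (Finset.mem_univ i)
      _ = ((S k).card : ℝ) * B := by rw [Finset.sum_const, nsmul_eq_mul]
  apply Finset.sup'_le
  intro i _
  calc ∑ j, c i j * xhat j
      ≤ ((S (P i)).card : ℝ) * ∑ j, chat (P i) j * xhat j := by
        rw [hdot, ← mul_assoc, mul_inv_cancel₀ (ne_of_gt (hcard _)), one_mul]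
        exact Finset.single_le_sum (fun i' _ => hynn xhat hxhat i') (by simp [hS])
    _ ≤ M * A := by
        have hdnn : (0:ℝ) ≤ ∑ j, chat (P i) j * xhat j := by
          rw [hdot]
          exact mul_nonneg (inv_nonneg.mpr (le_of_lt (hcard _)))
            (Finset.sum_nonneg fun i' _ => hynn xhat hxhat i')
        exact mul_le_mul (Finset.le_sup' (fun k => ((S k).card : ℝ)) (Finset.mem_univ _))
          (Finset.le_sup' (fun k => ∑ j, chat k j * xhat j) (Finset.mem_univ _)) hdnn hMnn
    _ ≤ M * B := by
        refine mul_le_mul_of_nonneg_left (le_trans (hopt x hx) h3) hMnn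
end

section
/- (Corollary 9) Let U = {c^1,…,c^N} ⊆ ℝ^n be a finite set of N nonnegative scenario vectors and let K be an integer with 1 ≤ K ≤ N. Then there exists a set C ⊆ conv(U) with |C| ≤ K such that for every i ∈ [N] there is ĉ ∈ conv(C) with c^i ≤ ⌈N/K⌉ · ĉ componentwise; consequently, the one-stage scenario reduction problem admits a solution with K cluster scenarios whose approximation guarantee is at most ⌈N/K⌉. -/
/-- Corollary 9: for any `1 ≤ K ≤ N` there exists a reduced set `C ⊆ conv(U)` of at most
`K` scenarios whose approximation guarantee is at most `⌈N/K⌉`. -/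
theorem stmt_10 {n N : ℕ} [NeZero N]
    (c : Fin N → Fin n → ℝ) (hc : ∀ i j, 0 ≤ c i j)
    (K : ℕ) (hK1 : 1 ≤ K) (hKN : K ≤ N) :
    ∃ C : Finset (Fin n → ℝ),
      (C : Set (Fin n → ℝ)) ⊆ convexHull ℝ (Set.range c) ∧
      C.card ≤ K ∧
      ∀ i, ∃ chat ∈ convexHull ℝ (C : Set (Fin n → ℝ)),
        ∀ j, c i j ≤ (⌈(N : ℝ) / (K : ℝ)⌉ : ℝ) * chat j := by
  classical
  have hK0 : (0:ℝ) < K := by exact_mod_cast hK1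
  have hN1 : 1 ≤ N := hK1.trans hKN
  set M : ℤ := ⌈(N : ℝ) / (K : ℝ)⌉ with hM
  -- groups by residue mod K
  set S : ℕ → Finset (Fin N) := fun g => Finset.univ.filter (fun i => (i:ℕ) % K = g) with hS
  set avg : ℕ → (Fin n → ℝ) := fun g => (((S g).card : ℝ))⁻¹ • ∑ k ∈ S g, c k with havg
  -- each group with g < K is nonempty
  have hne : ∀ g, g < K → (S g).Nonempty := by
    intro g hg
    exact ⟨⟨g, hg.trans_le hKN⟩, by simp [hS, Nat.mod_eq_of_lt hg]⟩
  have hpos : ∀ g, g < K → 0 < ((S g).card : ℝ) := by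
    intro g hg
    exact_mod_cast Finset.card_pos.mpr (hne g hg)
  -- cardinality bound : card (S g) ≤ M
  have hcard : ∀ g, ((S g).card : ℝ) ≤ (M : ℝ) := by
    intro g
    have hinj : ∀ k ∈ S g, ∀ l ∈ S g, (k:ℕ)/K = (l:ℕ)/K → k = l := by
      intro k hk l hl h
      have hk' : (k:ℕ) % K = g := by simpa [hS] using hk
      have hl' : (l:ℕ) % K = g := by simpa [hS] using hl
      have e1 := Nat.div_add_mod (k:ℕ) K
      have e2 := Nat.div_add_mod (l:ℕ) K
      refine Fin.ext ?_
      have ek : (k:ℕ) = K * ((k:ℕ)/K) + g := by rw [← hk']; exact (Nat.div_add_mod _ _).symm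
      have el : (l:ℕ) = K * ((l:ℕ)/K) + g := by rw [← hl']; exact (Nat.div_add_mod _ _).symm
      rw [ek, el, h]
    have hsub : (S g).image (fun k : Fin N => (k:ℕ)/K) ⊆ Finset.range ((N-1)/K + 1) := by
      intro x hx
      simp only [Finset.mem_image] at hx
      obtain ⟨k, _, rfl⟩ := hx
      have hk1 : (k:ℕ) ≤ N - 1 := by have := k.isLt; omega
      have hk2 : (k:ℕ) / K ≤ (N-1)/K := Nat.div_le_div_right hk1
      simp only [Finset.mem_range]
      exact Nat.lt_succ_of_le hk2
    have h1 : (S g).card ≤ (N-1)/K + 1 := by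
      calc (S g).card = ((S g).image (fun k : Fin N => (k:ℕ)/K)).card :=
            (Finset.card_image_of_injOn hinj).symm
        _ ≤ (Finset.range ((N-1)/K + 1)).card := Finset.card_le_card hsub
        _ = (N-1)/K + 1 := Finset.card_range _
    -- N ≤ K * M
    have hNM : (N : ℝ) ≤ (K : ℝ) * (M : ℝ) := by
      have hle := Int.le_ceil ((N : ℝ) / (K : ℝ))
      calc (N:ℝ) = (K:ℝ) * ((N:ℝ)/(K:ℝ)) := by field_simp
        _ ≤ (K:ℝ) * (M:ℝ) := mul_le_mul_of_nonneg_left hle hK0.le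
    have hNM' : (N : ℤ) ≤ (K : ℤ) * M := by exact_mod_cast hNM
    -- (N-1)/K + 1 ≤ M in ℤ
    have h2 : (((N-1)/K : ℕ) : ℤ) + 1 ≤ M := by
      by_contra h
      push_neg at h
      have hMq : M ≤ (((N-1)/K : ℕ) : ℤ) := Int.lt_add_one_iff.mp h
      have hK1' : (0:ℤ) ≤ (K:ℤ) := by positivity
      have hmul : M * (K:ℤ) ≤ (((N-1)/K : ℕ) : ℤ) * (K:ℤ) :=
        mul_le_mul_of_nonneg_right hMq hK1'
      have hdm : ((N-1)/K * K : ℕ) ≤ (N-1 : ℕ) := Nat.div_mul_le_self _ _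
      have hdm' : (((N-1)/K : ℕ) : ℤ) * (K:ℤ) ≤ (N:ℤ) - 1 := by
        have hh : (((N-1)/K * K : ℕ) : ℤ) ≤ (((N-1 : ℕ)) : ℤ) := by exact_mod_cast hdm
        rw [Nat.cast_mul, Nat.cast_sub hN1] at hh
        simpa using hh
      have hcomm : (K:ℤ) * M = M * (K:ℤ) := mul_comm _ _
      linarith
    calc ((S g).card : ℝ) ≤ ((((N-1)/K : ℕ) : ℝ) + 1) := by exact_mod_cast h1
      _ ≤ (M : ℝ) := by
            have h3 : (((((N-1)/K : ℕ) : ℤ) + 1 : ℤ) : ℝ) ≤ ((M : ℤ) : ℝ) := by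
              exact_mod_cast h2
            rw [Int.cast_add, Int.cast_one, Int.cast_natCast] at h3
            exact h3
  refine ⟨(Finset.range K).image avg, ?_, ?_, ?_⟩
  · -- each average is in the convex hull of the range
    intro x hx
    simp only [Finset.coe_image, Set.mem_image, Finset.coe_range, Set.mem_Iio] at hx
    obtain ⟨g, hg, rfl⟩ := hx
    have hmem := Finset.centerMass_mem_convexHull (S g)
      (w := fun _ => (1:ℝ)) (z := c) (fun i _ => zero_le_one)
      (by rw [Finset.sum_const, nsmul_eq_mul, mul_one]; exact hpos g hg)
      (fun i _ => Set.mem_range_self i)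
    simpa [Finset.centerMass, havg, Finset.sum_const, nsmul_eq_mul] using hmem
  · exact le_trans (Finset.card_image_le) (by simp)
  · intro i
    set g := (i:ℕ) % K with hg
    have hgK : g < K := Nat.mod_lt _ hK1
    have hiS : i ∈ S g := by simp [hS, hg]
    refine ⟨avg g, ?_, ?_⟩
    · apply subset_convexHull
      simp only [Finset.coe_image, Set.mem_image, Finset.coe_range, Set.mem_Iio]
      exact ⟨g, hgK, rfl⟩
    · intro j
      have hcd := hpos g hgK
      have hsum : c i j ≤ ∑ k ∈ S g, c k j :=
        Finset.single_le_sum (fun k _ => hc k j) hiS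
      have havgj : avg g j = (((S g).card : ℝ))⁻¹ * ∑ k ∈ S g, c k j := by
        simp [havg, Finset.sum_apply]
      have h1 : c i j ≤ ((S g).card : ℝ) * avg g j := by
        rw [havgj, ← mul_assoc, mul_inv_cancel₀ hcd.ne', one_mul]; exact hsum
      have havg_nonneg : 0 ≤ avg g j := by
        rw [havgj]
        exact mul_nonneg (by positivity) (Finset.sum_nonneg fun k _ => hc k j)
      calc c i j ≤ ((S g).card : ℝ) * avg g j := h1
        _ ≤ (M : ℝ) * avg g j := mul_le_mul_of_nonneg_right (hcard g) havg_nonneg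
end

section
/- (Midpoint scenario gives an N-approximation) Let U = {c^1,…,c^N} ⊆ ℝ^n be a finite set of nonnegative scenario vectors and let ĉ = (1/N) Σ_{i∈[N]} c^i be the average (midpoint) scenario. If x̂ ∈ X minimizes ĉᵀx over X, then for every x ∈ X it holds that max_{c ∈ U} cᵀx̂ ≤ N · max_{c ∈ U} cᵀx; that is, solving the one-stage problem with respect to the average scenario gives an N-approximation for the robust problem with respect to U. -/
/-- The midpoint (average) scenario gives an `N`-approximation for the one-stage
robust problem. -/
theorem stmt_11 {n N : ℕ} [NeZero N]
    (c : Fin N → Fin n → ℝ) (hc : ∀ i j, 0 ≤ c i j)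
    (X : Set (Fin n → ℝ)) (hXnonneg : ∀ x ∈ X, ∀ j, 0 ≤ x j) (hXne : X.Nonempty)
    (chat : Fin n → ℝ) (hchat : ∀ j, chat j = (N : ℝ)⁻¹ * ∑ i, c i j)
    (xhat : Fin n → ℝ) (hxhat : xhat ∈ X)
    (hopt : ∀ x ∈ X, ∑ j, chat j * xhat j ≤ ∑ j, chat j * x j) :
    ∀ x ∈ X,
      (Finset.univ.sup' Finset.univ_nonempty fun i => ∑ j, c i j * xhat j) ≤
        (N : ℝ) * (Finset.univ.sup' Finset.univ_nonempty fun i => ∑ j, c i j * x j) := by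
  intro x hx
  have hN : (N : ℝ) ≠ 0 := Nat.cast_ne_zero.mpr (NeZero.ne N)
  have heq : ∀ y : Fin n → ℝ, ∑ i, ∑ j, c i j * y j = (N : ℝ) * ∑ j, chat j * y j := by
    intro y
    rw [Finset.sum_comm]
    rw [Finset.mul_sum]
    congr 1
    ext j
    rw [hchat j, ← Finset.sum_mul, ← mul_assoc, ← mul_assoc, mul_inv_cancel₀ hN, one_mul]
  apply Finset.sup'_le
  intro i _
  have h1 : ∑ j, c i j * xhat j ≤ ∑ i', ∑ j, c i' j * xhat j := by
    apply Finset.single_le_sum (fun i' _ => ?_) (Finset.mem_univ i)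
    exact Finset.sum_nonneg fun j _ => mul_nonneg (hc i' j) (hXnonneg xhat hxhat j)
  have h2 : ∑ i', ∑ j, c i' j * x j ≤
      (N : ℝ) * (Finset.univ.sup' Finset.univ_nonempty fun i => ∑ j, c i j * x j) := by
    calc ∑ i' : Fin N, ∑ j, c i' j * x j
        ≤ ∑ _i' : Fin N,
            (Finset.univ.sup' Finset.univ_nonempty fun i => ∑ j, c i j * x j) :=
          Finset.sum_le_sum fun i' _ =>
            Finset.le_sup' (fun i => ∑ j, c i j * x j) (Finset.mem_univ i')
      _ = (N : ℝ) * _ := by simp [Finset.sum_const, Finset.card_univ, nsmul_eq_mul]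
  calc ∑ j, c i j * xhat j ≤ ∑ i', ∑ j, c i' j * xhat j := h1
    _ = (N : ℝ) * ∑ j, chat j * xhat j := heq xhat
    _ ≤ (N : ℝ) * ∑ j, chat j * x j := by
        apply mul_le_mul_of_nonneg_left (hopt x hx) (Nat.cast_nonneg N)
    _ = ∑ i', ∑ j, c i' j * x j := (heq x).symm
    _ ≤ _ := h2
end

section
/- (Two-stage example: the midpoint approach gives no approximation guarantee) Fix λ ∈ (0,1) and M > 0 with M · min(λ, 1−λ) > 1. Let X = {(x,y) ∈ {0,1}^2 × {0,1}^2 : x_1 + x_2 + y_1 + y_2 = 1}, first-stage costs C = (1,1), U = {(M,0), (0,M)}, and ĉ = λ·(M,0) + (1−λ)·(0,M) = (λM, (1−λ)M). Then every x̂ ∈ X' minimizing Cᵀx + min_{y ∈ X(x)} ĉᵀy over X' satisfies x̂ ∈ {(1,0), (0,1)} and g_U(x̂) = 1, while min_{x ∈ X'} g_U(x) = 0. In particular, for every α ≥ 0 there is such an instance where g_U(x̂) > α · min_{x ∈ X'} g_U(x), so solving with respect to a strict convex combination of the scenarios does not give any finite approximation guarantee for the two-stage robust problem. -/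
private lemma vec2_ext {y : Fin 2 → ℝ} {a b : ℝ} (h0 : y 0 = a) (h1 : y 1 = b) :
    y = ![a, b] := by
  funext i; fin_cases i <;> simpa

private lemma sup'_fin2 (h : Fin 2 → ℝ) :
    Finset.univ.sup' Finset.univ_nonempty h = max (h 0) (h 1) := by
  apply le_antisymm
  · exact Finset.sup'_le _ _ (fun i _ => by
      fin_cases i
      · exact le_max_left _ _
      · exact le_max_right _ _)
  · exact max_le (Finset.le_sup' _ (Finset.mem_univ 0)) (Finset.le_sup' _ (Finset.mem_univ 1))

/-- Two-stage example: solving with respect to a strict convex combination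
`chat = λ(M,0) + (1-λ)(0,M)` of the two scenarios yields, whenever
`M · min(λ, 1-λ) > 1`, only the first-stage solutions `(1,0)` or `(0,1)`, each with
true robust value `g_U = 1`, while the optimal robust value `min_{x ∈ X'} g_U(x)` is `0`
(so the midpoint approach gives no finite approximation guarantee). -/
theorem stmt_15 (lam M : ℝ) (hlam0 : 0 < lam) (hlam1 : lam < 1) (hM : 0 < M)
    (hMbig : 1 < M * min lam (1 - lam))
    (X : Set ((Fin 2 → ℝ) × (Fin 2 → ℝ)))
    (hX : X = {p | (∀ j, p.1 j = 0 ∨ p.1 j = 1) ∧ (∀ j, p.2 j = 0 ∨ p.2 j = 1) ∧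
      p.1 0 + p.1 1 + p.2 0 + p.2 1 = 1})
    (c : Fin 2 → Fin 2 → ℝ) (hc0 : c 0 = ![M, 0]) (hc1 : c 1 = ![0, M])
    (chat : Fin 2 → ℝ) (hchat : chat = ![lam * M, (1 - lam) * M])
    (f : (Fin 2 → ℝ) → ℝ)
    (hf : ∀ x, f x = (1 * x 0 + 1 * x 1) +
      sInf ((fun y => ∑ j, chat j * y j) '' {y | (x, y) ∈ X}))
    (g : (Fin 2 → ℝ) → ℝ)
    (hg : ∀ x, g x = (1 * x 0 + 1 * x 1) +
      (Finset.univ.sup' Finset.univ_nonempty fun i =>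
        sInf ((fun y => ∑ j, c i j * y j) '' {y | (x, y) ∈ X}))) :
    (∀ xhat ∈ {x : Fin 2 → ℝ | ∃ y, (x, y) ∈ X},
      (∀ x ∈ {x : Fin 2 → ℝ | ∃ y, (x, y) ∈ X}, f xhat ≤ f x) →
        (xhat = ![1, 0] ∨ xhat = ![0, 1]) ∧ g xhat = 1) ∧
    (∃ x ∈ {x : Fin 2 → ℝ | ∃ y, (x, y) ∈ X}, g x = 0) ∧
    (∀ x ∈ {x : Fin 2 → ℝ | ∃ y, (x, y) ∈ X}, 0 ≤ g x) := by
  -- classification of feasible first-stage vectors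
  have hfeas : ∀ x : Fin 2 → ℝ, (∃ y, (x, y) ∈ X) →
      x = ![0, 0] ∨ x = ![1, 0] ∨ x = ![0, 1] := by
    rintro x ⟨y, hy⟩
    rw [hX] at hy
    obtain ⟨hx, hyb, hsum⟩ := hy
    rcases hx 0 with h0 | h0 <;> rcases hx 1 with h1 | h1
    · exact Or.inl (vec2_ext h0 h1)
    · exact Or.inr (Or.inr (vec2_ext h0 h1))
    · exact Or.inr (Or.inl (vec2_ext h0 h1))
    · exfalso
      rcases hyb 0 with k0 | k0 <;> rcases hyb 1 with k1 | k1 <;>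
        rw [h0, h1, k0, k1] at hsum <;> norm_num at hsum
  -- second-stage feasible sets
  have hS00 : {y : Fin 2 → ℝ | ((![0, 0] : Fin 2 → ℝ), y) ∈ X} =
      {![1, 0], ![0, 1]} := by
    ext y
    simp only [hX, Set.mem_setOf_eq, Set.mem_insert_iff, Set.mem_singleton_iff,
      Matrix.cons_val_zero, Matrix.cons_val_one, Matrix.head_cons]
    constructor
    · rintro ⟨-, hyb, hsum⟩
      rcases hyb 0 with k0 | k0 <;> rcases hyb 1 with k1 | k1 <;>
        rw [k0, k1] at hsum <;> norm_num at hsum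
      · exact Or.inr (vec2_ext k0 k1)
      · exact Or.inl (vec2_ext k0 k1)
    · rintro (rfl | rfl) <;>
        exact ⟨fun j => by fin_cases j <;> norm_num,
          fun j => by fin_cases j <;> norm_num, by norm_num⟩
  have hS10 : {y : Fin 2 → ℝ | ((![1, 0] : Fin 2 → ℝ), y) ∈ X} =
      {![0, 0]} := by
    ext y
    simp only [hX, Set.mem_setOf_eq, Set.mem_singleton_iff,
      Matrix.cons_val_zero, Matrix.cons_val_one, Matrix.head_cons]
    constructor
    · rintro ⟨-, hyb, hsum⟩
      rcases hyb 0 with k0 | k0 <;> rcases hyb 1 with k1 | k1 <;>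
        rw [k0, k1] at hsum <;> norm_num at hsum
      exact vec2_ext k0 k1
    · rintro rfl
      exact ⟨fun j => by fin_cases j <;> norm_num,
        fun j => by fin_cases j <;> norm_num, by norm_num⟩
  have hS01 : {y : Fin 2 → ℝ | ((![0, 1] : Fin 2 → ℝ), y) ∈ X} =
      {![0, 0]} := by
    ext y
    simp only [hX, Set.mem_setOf_eq, Set.mem_singleton_iff,
      Matrix.cons_val_zero, Matrix.cons_val_one, Matrix.head_cons]
    constructor
    · rintro ⟨-, hyb, hsum⟩
      rcases hyb 0 with k0 | k0 <;> rcases hyb 1 with k1 | k1 <;>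
        rw [k0, k1] at hsum <;> norm_num at hsum
      exact vec2_ext k0 k1
    · rintro rfl
      exact ⟨fun j => by fin_cases j <;> norm_num,
        fun j => by fin_cases j <;> norm_num, by norm_num⟩
  -- membership facts
  have mem00 : (![0, 0] : Fin 2 → ℝ) ∈ {x : Fin 2 → ℝ | ∃ y, (x, y) ∈ X} := by
    refine ⟨![1, 0], ?_⟩
    rw [hX]
    exact ⟨fun j => by fin_cases j <;> norm_num,
      fun j => by fin_cases j <;> norm_num, by norm_num⟩
  have mem10 : (![1, 0] : Fin 2 → ℝ) ∈ {x : Fin 2 → ℝ | ∃ y, (x, y) ∈ X} := by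
    refine ⟨![0, 0], ?_⟩
    rw [hX]
    exact ⟨fun j => by fin_cases j <;> norm_num,
      fun j => by fin_cases j <;> norm_num, by norm_num⟩
  -- g values
  have hg10 : g ![1, 0] = 1 := by
    rw [hg, sup'_fin2]
    have h0 : sInf ((fun y => ∑ j, c 0 j * y j) ''
        {y | ((![1, 0] : Fin 2 → ℝ), y) ∈ X}) = 0 := by
      rw [hS10, Set.image_singleton, csInf_singleton]
      simp [hc0, Fin.sum_univ_two]
    have h1 : sInf ((fun y => ∑ j, c 1 j * y j) ''
        {y | ((![1, 0] : Fin 2 → ℝ), y) ∈ X}) = 0 := by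
      rw [hS10, Set.image_singleton, csInf_singleton]
      simp [hc1, Fin.sum_univ_two]
    rw [h0, h1]
    norm_num
  have hg01 : g ![0, 1] = 1 := by
    rw [hg, sup'_fin2]
    have h0 : sInf ((fun y => ∑ j, c 0 j * y j) ''
        {y | ((![0, 1] : Fin 2 → ℝ), y) ∈ X}) = 0 := by
      rw [hS01, Set.image_singleton, csInf_singleton]
      simp [hc0, Fin.sum_univ_two]
    have h1 : sInf ((fun y => ∑ j, c 1 j * y j) ''
        {y | ((![0, 1] : Fin 2 → ℝ), y) ∈ X}) = 0 := by
      rw [hS01, Set.image_singleton, csInf_singleton]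
      simp [hc1, Fin.sum_univ_two]
    rw [h0, h1]
    norm_num
  have hg00 : g ![0, 0] = 0 := by
    rw [hg, sup'_fin2]
    have h0 : sInf ((fun y => ∑ j, c 0 j * y j) ''
        {y | ((![0, 0] : Fin 2 → ℝ), y) ∈ X}) = 0 := by
      rw [hS00, Set.image_pair, csInf_pair]
      simp [hc0, Fin.sum_univ_two, min_eq_right hM.le]
    have h1 : sInf ((fun y => ∑ j, c 1 j * y j) ''
        {y | ((![0, 0] : Fin 2 → ℝ), y) ∈ X}) = 0 := by
      rw [hS00, Set.image_pair, csInf_pair]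
      simp [hc1, Fin.sum_univ_two, min_eq_left hM.le]
    rw [h0, h1]
    norm_num
  -- f values
  have hf10 : f ![1, 0] = 1 := by
    rw [hf, hS10, Set.image_singleton, csInf_singleton]
    simp [hchat, Fin.sum_univ_two]
  have hf00 : 1 < f ![0, 0] := by
    rw [hf, hS00, Set.image_pair, csInf_pair]
    simp only [hchat, Fin.sum_univ_two, Matrix.cons_val_zero, Matrix.cons_val_one,
      Matrix.head_cons, mul_one, mul_zero, one_mul, add_zero, zero_add]
    have hl : 1 < lam * M := by
      calc 1 < M * min lam (1 - lam) := hMbig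
        _ ≤ M * lam := by
          exact mul_le_mul_of_nonneg_left (min_le_left _ _) hM.le
        _ = lam * M := mul_comm _ _
    have hr : 1 < (1 - lam) * M := by
      calc 1 < M * min lam (1 - lam) := hMbig
        _ ≤ M * (1 - lam) := by
          exact mul_le_mul_of_nonneg_left (min_le_right _ _) hM.le
        _ = (1 - lam) * M := mul_comm _ _
    exact lt_min hl hr
  refine ⟨?_, ⟨![0, 0], mem00, hg00⟩, ?_⟩
  · intro xhat hxhat hmin
    rcases hfeas xhat hxhat with rfl | rfl | rfl
    · exfalso
      have := hmin _ mem10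
      rw [hf10] at this
      linarith
    · exact ⟨Or.inl rfl, hg10⟩
    · exact ⟨Or.inr rfl, hg01⟩
  · intro x hx
    rcases hfeas x hx with rfl | rfl | rfl
    · rw [hg00]
    · rw [hg10]; norm_num
    · rw [hg01]; norm_num
end
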